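/- arXiv:2208.08306 — 2 statements merged into one kernel-verified Lean document; each statement's English description precedes it below -/
import Mathlib

section
/- Let N ≥ 1 and m ≥ 1, and consider the slab S_N = {(x,y) ∈ ℤ² : y ≤ x ≤ y + N}. Let p_i = (i,i) and q_i = (⌊i+N/2⌋, ⌈i-N/2⌉). Then any up-right lattice path from p_0 to q_m and any up-right lattice path from q_0 to p_m, both contained in S_N, must share at least one lattice point. -/
/-- An up-right lattice path: consecutive steps are `(1,0)` or `(0,1)`. -/
def UpRight (π : List (ℤ × ℤ)) : Prop :=
  π.Chain' (fun z w => w = z + ((1, 0) : ℤ × ℤ) ∨ w = z + ((0, 1) : ℤ × ℤ))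

/-- `IsPath A u v π`: `π` is an up-right lattice path from `u` to `v` fully contained in `A`. -/
def IsPath (A : Set (ℤ × ℤ)) (u v : ℤ × ℤ) (π : List (ℤ × ℤ)) : Prop :=
  UpRight π ∧ π.head? = some u ∧ π.getLast? = some v ∧ ∀ z ∈ π, z ∈ A

/-- The passage time of a path: sum of the weights along the path, excluding the final site. -/
def pathWeight (ω : ℤ × ℤ → ℝ) (π : List (ℤ × ℤ)) : ℝ :=
  (π.dropLast.map ω).sum

/-- The last passage time from `u` to `v` over up-right paths contained in `A`. -/
noncomputable def LPT (ω : ℤ × ℤ → ℝ) (A : Set (ℤ × ℤ)) (u v : ℤ × ℤ) : ℝ :=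
  sSup {t | ∃ π, IsPath A u v π ∧ pathWeight ω π = t}


/-- The slab `S_N = {(x,y) : y ≤ x ≤ y + N}`. -/
def slab (N : ℕ) : Set (ℤ × ℤ) := {v | v.2 ≤ v.1 ∧ v.1 ≤ v.2 + (N : ℤ)}

/-- The point `p_i = (i, i)` on the upper boundary. -/
def ppt (i : ℤ) : ℤ × ℤ := (i, i)

/-- The point `q_i = (⌊i + N/2⌋, ⌈i - N/2⌉)`. -/
def qpt (N : ℕ) (i : ℤ) : ℤ × ℤ := (i + ((N / 2 : ℕ) : ℤ), i - ((N / 2 : ℕ) : ℤ))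

lemma upRight_step {π : List (ℤ × ℤ)} (h : UpRight π) {i : ℕ} (hi : i + 1 < π.length) :
    π[i+1] = π[i] + ((1,0) : ℤ×ℤ) ∨ π[i+1] = π[i] + ((0,1) : ℤ×ℤ) := by
  have := List.isChain_iff_getElem.mp h i (by omega)
  simpa using this

lemma sum_lemma {π : List (ℤ × ℤ)} (h : UpRight π) :
    ∀ i (hi : i < π.length), (π[i]'hi).1 + (π[i]'hi).2
      = (π[0]'(by omega)).1 + (π[0]'(by omega)).2 + i := by
  intro i
  induction i with
  | zero => intro hi; simp
  | succ k ih =>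
    intro hi
    have hk : k < π.length := by omega
    rcases upRight_step h hi with hs | hs <;>
      · rw [hs]; have := ih hk; simp [Prod.fst_add, Prod.snd_add]; omega

lemma diff_step {π : List (ℤ × ℤ)} (h : UpRight π) {i : ℕ} (hi : i + 1 < π.length) :
    (π[i+1]).1 - (π[i+1]).2 = (π[i]).1 - (π[i]).2 + 1 ∨
    (π[i+1]).1 - (π[i+1]).2 = (π[i]).1 - (π[i]).2 - 1 := by
  rcases upRight_step h hi with hs | hs <;> rw [hs] <;> simp [Prod.fst_add, Prod.snd_add] <;> omega

lemma ivt_even (g : ℕ → ℤ) (hev : ∀ k, Even (g k)) :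
    ∀ n, g 0 ≤ 0 → 0 ≤ g n →
    (∀ k, k < n → g (k+1) = g k - 2 ∨ g (k+1) = g k ∨ g (k+1) = g k + 2) →
    ∃ k ≤ n, g k = 0 := by
  intro n
  induction n with
  | zero => intro h0 hn _; exact ⟨0, le_refl 0, le_antisymm h0 hn⟩
  | succ p ih =>
    intro h0 hn hstep
    by_cases hp : 0 ≤ g p
    · obtain ⟨k, hk, hk0⟩ := ih h0 hp (fun k hk => hstep k (by omega))
      exact ⟨k, by omega, hk0⟩
    · push_neg at hp
      obtain ⟨a, ha⟩ := hev p
      rcases hstep p (by omega) with h | h | h <;> refine ⟨p+1, le_refl _, ?_⟩ <;> omega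


/-- Any up-right lattice path in the slab from `p_0` to `q_m` and any up-right lattice
path in the slab from `q_0` to `p_m` must share at least one lattice point. -/
theorem stmt_6 (N : ℕ) (hN : 1 ≤ N) (m : ℤ) (hm : 1 ≤ m)
    (π₁ π₂ : List (ℤ × ℤ))
    (h1 : IsPath (slab N) (ppt 0) (qpt N m) π₁)
    (h2 : IsPath (slab N) (qpt N 0) (ppt m) π₂) :
    ∃ z, z ∈ π₁ ∧ z ∈ π₂ := by
  obtain ⟨hc1, hh1, hl1, -⟩ := h1
  obtain ⟨hc2, hh2, hl2, -⟩ := h2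
  have hne1 : π₁ ≠ [] := by rintro rfl; simp at hh1
  have hne2 : π₂ ≠ [] := by rintro rfl; simp at hh2
  have hp1 : 0 < π₁.length := List.length_pos_iff.mpr hne1
  have hp2 : 0 < π₂.length := List.length_pos_iff.mpr hne2
  have h10 : π₁[0] = ppt 0 := by
    rw [List.getElem_zero]
    rw [List.head?_eq_head hne1] at hh1; exact Option.some.inj hh1
  have h20 : π₂[0] = qpt N 0 := by
    rw [List.getElem_zero]
    rw [List.head?_eq_head hne2] at hh2; exact Option.some.inj hh2
  have h1l : π₁[π₁.length - 1]'(by omega) = qpt N m := by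
    rw [← List.getLast_eq_getElem hne1]
    rw [List.getLast?_eq_getLast hne1] at hl1; exact Option.some.inj hl1
  have h2l : π₂[π₂.length - 1]'(by omega) = ppt m := by
    rw [← List.getLast_eq_getElem hne2]
    rw [List.getLast?_eq_getLast hne2] at hl2; exact Option.some.inj hl2
  set c : ℤ := ((N / 2 : ℕ) : ℤ) with hc
  have hc0 : 0 ≤ c := Int.natCast_nonneg _
  -- lengths
  have hL1 : (π₁.length : ℤ) = 2 * m + 1 := by
    have := sum_lemma hc1 (π₁.length - 1) (by omega)
    rw [h1l, h10] at this
    simp [qpt, ppt] at this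
    have : ((π₁.length - 1 : ℕ) : ℤ) = 2 * m := by omega
    omega
  have hL2 : (π₂.length : ℤ) = 2 * m + 1 := by
    have := sum_lemma hc2 (π₂.length - 1) (by omega)
    rw [h2l, h20] at this
    simp [qpt, ppt] at this
    have : ((π₂.length - 1 : ℕ) : ℤ) = 2 * m := by omega
    omega
  set n : ℕ := π₁.length - 1 with hn
  have hlen2 : π₂.length = π₁.length := by omega
  have hkl : ∀ k ≤ n, k < π₁.length ∧ k < π₂.length := by omega
  -- sums along paths
  have hsum1 : ∀ k (hk : k < π₁.length), (π₁[k]).1 + (π₁[k]).2 = (k : ℤ) := by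
    intro k hk
    have := sum_lemma hc1 k hk
    rw [h10] at this; simp [ppt] at this; omega
  have hsum2 : ∀ k (hk : k < π₂.length), (π₂[k]).1 + (π₂[k]).2 = (k : ℤ) := by
    intro k hk
    have := sum_lemma hc2 k hk
    rw [h20] at this; simp [qpt] at this; omega
  set g : ℕ → ℤ := fun k =>
    ((π₁.getD k 0).1 - (π₁.getD k 0).2) - ((π₂.getD k 0).1 - (π₂.getD k 0).2) with hg
  have hgk : ∀ k (h1 : k < π₁.length) (h2 : k < π₂.length),
      g k = ((π₁[k]'h1).1 - (π₁[k]'h1).2) - ((π₂[k]'h2).1 - (π₂[k]'h2).2) := by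
    intro k h1 h2
    simp [hg, List.getD, List.getElem?_eq_getElem h1, List.getElem?_eq_getElem h2]
  have hev : ∀ k, Even (g k) := by
    intro k
    by_cases hk : k ≤ n
    · rw [hgk k (hkl k hk).1 (hkl k hk).2]
      have s1 := hsum1 k (hkl k hk).1
      have s2 := hsum2 k (hkl k hk).2
      exact ⟨(π₂[k]'(hkl k hk).2).2 - (π₁[k]'(hkl k hk).1).2, by omega⟩
    · simp [hg, List.getD, List.getElem?_eq_none (l := π₁) (show π₁.length ≤ k by omega),
        List.getElem?_eq_none (l := π₂) (show π₂.length ≤ k by omega)]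
  have hg0 : g 0 ≤ 0 := by
    rw [hgk 0 hp1 hp2, h10, h20]; simp [ppt, qpt]; omega
  have hgn : 0 ≤ g n := by
    rw [hgk n (hkl n le_rfl).1 (hkl n le_rfl).2]
    have e1 : π₁[n]'(hkl n le_rfl).1 = qpt N m := h1l
    have e2 : π₂[n]'(hkl n le_rfl).2 = ppt m := by
      rw [← h2l]; congr 1; omega
    rw [e1, e2]; simp [ppt, qpt]; omega
  have hstep : ∀ k, k < n → g (k+1) = g k - 2 ∨ g (k+1) = g k ∨ g (k+1) = g k + 2 := by
    intro k hk
    have hk1 : k + 1 ≤ n := hk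
    rw [hgk k (hkl k (by omega)).1 (hkl k (by omega)).2, hgk (k+1) (hkl _ hk1).1 (hkl _ hk1).2]
    have d1 := diff_step hc1 (show k + 1 < π₁.length from (hkl (k+1) hk1).1)
    have d2 := diff_step hc2 (show k + 1 < π₂.length from (hkl (k+1) hk1).2)
    rcases d1 with d1 | d1 <;> rcases d2 with d2 | d2 <;> omega
  obtain ⟨k, hkn, hk0⟩ := ivt_even g hev n hg0 hgn hstep
  have h1k : k < π₁.length := (hkl k hkn).1
  have h2k : k < π₂.length := (hkl k hkn).2
  refine ⟨π₁[k], List.getElem_mem _, ?_⟩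
  have heq : π₁[k] = π₂[k]'h2k := by
    rw [hgk k h1k h2k] at hk0
    have s1 := hsum1 k h1k
    have s2 := hsum2 k h2k
    have : (π₁[k]'h1k).1 = (π₂[k]'h2k).1 ∧ (π₁[k]'h1k).2 = (π₂[k]'h2k).2 := by omega
    exact Prod.ext this.1 this.2
  rw [heq]; exact List.getElem_mem _
end

section
/- Let β > 0, M ∈ ℕ, and δ ∈ ℝ with |δ| ≤ 1/2. Let X = (X₁,…,X_M) be i.i.d. Exponential(β) and X^δ = ((1+δ)X₁,…,(1+δ)X_M). Then the total variation distance between the laws of X and X^δ satisfies ‖X - X^δ‖_TV ≤ √(M/2) · |δ|. Moreover, if Mδ² ≤ ε² then ‖X - X^δ‖_TV ≤ c (M ε²)^{1/4} for a universal constant c (for |δ| ≤ ε). -/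
open MeasureTheory ProbabilityTheory

/-- Total variation distance between two measures. -/
noncomputable def tvDist {Ω : Type*} [MeasurableSpace Ω] (μ ν : Measure Ω) : ℝ :=
  ⨆ A : {A : Set Ω // MeasurableSet A}, |(μ A.1).toReal - (ν A.1).toReal|

/-- The law of a vector of `M` i.i.d. Exponential(β) random variables. -/
noncomputable def lawX (β : ℝ) (M : ℕ) : Measure (Fin M → ℝ) :=
  Measure.pi (fun _ => expMeasure β)

/-- The law of the perturbed vector `X^δ = ((1+δ)X₁, …, (1+δ)X_M)`. -/
noncomputable def lawXdelta (β : ℝ) (M : ℕ) (δ : ℝ) : Measure (Fin M → ℝ) :=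
  (lawX β M).map (fun x i => (1 + δ) * x i)


open Set
open scoped ENNReal NNReal


lemma MW.lintegral_pi_prod : ∀ {n : ℕ} (μ : Fin n → Measure ℝ), (∀ i, SigmaFinite (μ i)) →
    ∀ (f : Fin n → ℝ → ℝ≥0∞), (∀ i, Measurable (f i)) →
    ∫⁻ x : Fin n → ℝ, ∏ i, f i (x i) ∂Measure.pi μ = ∏ i, ∫⁻ y, f i y ∂μ i := by
  intro n
  induction n with
  | zero =>
    intro μ _ f _
    simp [Measure.pi_univ]
  | succ n ih =>
    intro μ hs f hf
    haveI := hs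
    have hFmeas : Measurable fun x : Fin (n+1) → ℝ => ∏ i, f i (x i) :=
      Finset.measurable_prod _ fun i _ => (hf i).comp (measurable_pi_apply i)
    rw [← ((measurePreserving_piFinSuccAbove μ 0).symm).lintegral_comp hFmeas]
    simp_rw [MeasurableEquiv.piFinSuccAbove_symm_apply, Fin.insertNthEquiv,
      Fin.prod_univ_succ, Fin.insertNth_zero, Equiv.coe_fn_mk, Fin.zero_succAbove,
      Fin.cons_zero, Fin.cons_succ, cast_eq]
    rw [lintegral_prod_mul (f := f 0) (g := fun b : Fin n → ℝ => ∏ x : Fin n, f x.succ (b x)) (hf 0).aemeasurable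
      (Finset.measurable_prod _ fun j _ => (hf _).comp (measurable_pi_apply j)).aemeasurable,
      ih _ (fun j => hs _) _ (fun j => hf _)]
lemma MW.pi_withDensity {M : ℕ} (μ : Measure ℝ) [SigmaFinite μ] (f : ℝ → ℝ≥0∞)
    (hf : Measurable f) [SigmaFinite (μ.withDensity f)] :
    Measure.pi (fun _ : Fin M => μ.withDensity f)
      = (Measure.pi fun _ : Fin M => μ).withDensity fun x => ∏ i, f (x i) := by
  refine Measure.pi_eq fun s hs => ?_
  rw [withDensity_apply _ (MeasurableSet.univ_pi hs),
    ← lintegral_indicator (MeasurableSet.univ_pi hs)]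
  have hind : ∀ x : Fin M → ℝ,
      (Set.univ.pi s).indicator (fun x => ∏ i, f (x i)) x = ∏ i, (s i).indicator f (x i) := by
    intro x
    by_cases hx : x ∈ Set.univ.pi s
    · rw [Set.indicator_of_mem hx]
      exact Finset.prod_congr rfl fun i _ => (Set.indicator_of_mem (hx i trivial) f).symm
    · rw [Set.indicator_of_notMem hx]
      simp only [Set.mem_pi, Set.mem_univ, forall_true_left, not_forall] at hx
      obtain ⟨i, hi⟩ := hx
      exact (Finset.prod_eq_zero (Finset.mem_univ i)
        (by rw [Set.indicator_of_notMem hi])).symm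
  simp_rw [hind]
  rw [MW.lintegral_pi_prod _ (fun _ => inferInstance) _ (fun i => hf.indicator (hs i))]
  exact Finset.prod_congr rfl fun i _ => by
    rw [withDensity_apply _ (hs i), ← lintegral_indicator (hs i)]

lemma MW.expMeasure_eq (r : ℝ) : expMeasure r = volume.withDensity (exponentialPDF r) := rfl

lemma MW.expMeasure_Iic {r : ℝ} (hr : 0 < r) (x : ℝ) :
    expMeasure r (Iic x) = ENNReal.ofReal (if 0 ≤ x then 1 - Real.exp (-(r * x)) else 0) := by
  rw [MW.expMeasure_eq, withDensity_apply _ measurableSet_Iic,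
    lintegral_exponentialPDF_eq_antiDeriv hr]

lemma MW.expMeasure_map {β c : ℝ} (hβ : 0 < β) (hc : 0 < c) :
    (expMeasure β).map (fun x => c * x) = expMeasure (β / c) := by
  haveI := isProbabilityMeasure_expMeasure hβ
  haveI : IsProbabilityMeasure ((expMeasure β).map fun x => c * x) :=
    Measure.isProbabilityMeasure_map (measurable_const_mul c).aemeasurable
  refine Measure.ext_of_Iic _ _ fun a => ?_
  rw [Measure.map_apply (measurable_const_mul c) measurableSet_Iic]
  have hpre : (fun x => c * x) ⁻¹' (Iic a) = Iic (a / c) := by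
    ext y
    simp only [Set.mem_preimage, Set.mem_Iic, le_div_iff₀ hc, mul_comm]
  rw [hpre, MW.expMeasure_Iic hβ, MW.expMeasure_Iic (div_pos hβ hc)]
  have hiff : 0 ≤ a / c ↔ 0 ≤ a := by rw [le_div_iff₀ hc, zero_mul]
  congr 1
  by_cases ha : 0 ≤ a
  · rw [if_pos (hiff.2 ha), if_pos ha]
    congr 2
    field_simp
  · rw [if_neg (fun h => ha (hiff.1 h)), if_neg ha]
noncomputable def MW.g1 (β γ : ℝ) : ℝ → ℝ :=
  Set.indicator (Set.Ici 0) fun y => γ / β * Real.exp ((β - γ) * y)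

lemma MW.g1_nonneg {β γ : ℝ} (hβ : 0 < β) (hγ : 0 < γ) (y : ℝ) : 0 ≤ MW.g1 β γ y := by
  unfold MW.g1
  by_cases hy : y ∈ Set.Ici (0:ℝ)
  · rw [Set.indicator_of_mem hy]; positivity
  · rw [Set.indicator_of_notMem hy]

lemma MW.g1_measurable (β γ : ℝ) : Measurable (MW.g1 β γ) :=
  (measurable_const.mul ((measurable_id.const_mul (β - γ)).exp)).indicator measurableSet_Ici

lemma MW.expMeasure_withDensity {β γ : ℝ} (hβ : 0 < β) (hγ : 0 < γ) :
    (expMeasure β).withDensity (fun y => ENNReal.ofReal (MW.g1 β γ y)) = expMeasure γ := by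
  rw [MW.expMeasure_eq, MW.expMeasure_eq,
    ← withDensity_mul _
      (show Measurable (exponentialPDF β) from (measurable_exponentialPDFReal β).ennreal_ofReal)
      (MW.g1_measurable β γ).ennreal_ofReal]
  congr 1
  funext y
  rcases lt_or_ge y 0 with hy | hy
  · simp [Pi.mul_apply, exponentialPDF_of_neg hy]
  · rw [Pi.mul_apply, exponentialPDF_of_nonneg hy, exponentialPDF_of_nonneg hy,
      MW.g1, Set.indicator_of_mem (show y ∈ Set.Ici 0 from hy), ← ENNReal.ofReal_mul (by positivity)]
    congr 1
    have h2 : Real.exp (-(β * y)) * Real.exp ((β - γ) * y) = Real.exp (-(γ * y)) := by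
      rw [← Real.exp_add]; congr 1; ring
    calc β * Real.exp (-(β * y)) * (γ / β * Real.exp ((β - γ) * y))
        = (β * (γ / β)) * (Real.exp (-(β * y)) * Real.exp ((β - γ) * y)) := by ring
      _ = γ * Real.exp (-(γ * y)) := by rw [h2]; congr 1; field_simp

lemma MW.sqrt_g1 {β γ : ℝ} (hβ : 0 < β) (hγ : 0 < γ) (y : ℝ) :
    Real.sqrt (MW.g1 β γ y)
      = Set.indicator (Set.Ici 0) (fun y => Real.sqrt (γ / β) * Real.exp ((β - γ) / 2 * y)) y := by
  unfold MW.g1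
  by_cases hy : y ∈ Set.Ici (0:ℝ)
  · rw [Set.indicator_of_mem hy, Set.indicator_of_mem hy]
    have : Real.exp ((β - γ) * y) = Real.exp ((β - γ) / 2 * y) ^ 2 := by
      rw [sq, ← Real.exp_add]; congr 1; ring
    rw [this, Real.sqrt_mul (by positivity) _, Real.sqrt_sq (Real.exp_nonneg _)]
  · rw [Set.indicator_of_notMem hy, Set.indicator_of_notMem hy, Real.sqrt_zero]
lemma MW.integral_sqrt_g1 {β γ : ℝ} (hβ : 0 < β) (hγ : 0 < γ) :
    ∫ y, Real.sqrt (MW.g1 β γ y) ∂(expMeasure β) = 2 * Real.sqrt (γ * β) / (β + γ) := by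
  have hm : Measurable fun y => Real.sqrt (MW.g1 β γ y) :=
    Real.continuous_sqrt.measurable.comp (MW.g1_measurable β γ)
  rw [integral_eq_lintegral_of_nonneg_ae (ae_of_all _ fun y => Real.sqrt_nonneg _)
    hm.aestronglyMeasurable]
  have hptwise : ∀ y, (exponentialPDF β * fun y => ENNReal.ofReal (Real.sqrt (MW.g1 β γ y))) y
      = ENNReal.ofReal (2 * Real.sqrt (γ * β) / (β + γ)) * exponentialPDF ((β + γ) / 2) y := by
    intro y
    rcases lt_or_ge y 0 with hy | hy
    · simp [Pi.mul_apply, exponentialPDF_of_neg hy]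
    · rw [Pi.mul_apply, exponentialPDF_of_nonneg hy, exponentialPDF_of_nonneg hy,
        MW.sqrt_g1 hβ hγ, Set.indicator_of_mem (show y ∈ Set.Ici 0 from hy),
        ← ENNReal.ofReal_mul (by positivity), ← ENNReal.ofReal_mul (by positivity)]
      congr 1
      have hexp : Real.exp (-(β * y)) * Real.exp ((β - γ) / 2 * y)
          = Real.exp (-((β + γ) / 2 * y)) := by
        rw [← Real.exp_add]; congr 1; ring
      have hsq : β * Real.sqrt (γ / β) = Real.sqrt (γ * β) := by
        rw [show γ * β = γ / β * β ^ 2 by field_simp, Real.sqrt_mul (by positivity),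
          Real.sqrt_sq hβ.le]
        ring
      calc β * Real.exp (-(β * y)) * (Real.sqrt (γ / β) * Real.exp ((β - γ) / 2 * y))
          = (β * Real.sqrt (γ / β)) * (Real.exp (-(β * y)) * Real.exp ((β - γ) / 2 * y)) := by
            ring
        _ = Real.sqrt (γ * β) * Real.exp (-((β + γ) / 2 * y)) := by rw [hexp, hsq]
        _ = 2 * Real.sqrt (γ * β) / (β + γ) * ((β + γ) / 2 * Real.exp (-((β + γ) / 2 * y))) := by
            field_simp
  have key : ∫⁻ y, ENNReal.ofReal (Real.sqrt (MW.g1 β γ y)) ∂(expMeasure β)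
      = ENNReal.ofReal (2 * Real.sqrt (γ * β) / (β + γ)) := by
    rw [MW.expMeasure_eq, lintegral_withDensity_eq_lintegral_mul _
      (show Measurable (exponentialPDF β) from (measurable_exponentialPDFReal β).ennreal_ofReal)
      hm.ennreal_ofReal]
    simp_rw [hptwise]
    rw [lintegral_const_mul _ (show Measurable (exponentialPDF ((β + γ)/2)) from
        (measurable_exponentialPDFReal _).ennreal_ofReal),
      lintegral_exponentialPDF_eq_one (by positivity), mul_one]
  rw [key, ENNReal.toReal_ofReal (by positivity)]
lemma MW.tv_core {Ω : Type*} [MeasurableSpace Ω] (μ : Measure Ω) [IsProbabilityMeasure μ]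
    (g : Ω → ℝ) (hgm : Measurable g) (hg0 : ∀ x, 0 ≤ g x)
    (hν : IsProbabilityMeasure (μ.withDensity fun x => ENNReal.ofReal (g x)))
    {A : Set Ω} (hA : MeasurableSet A) {ρ : ℝ} (hρ : ∫ x, Real.sqrt (g x) ∂μ = ρ) :
    |(μ A).toReal - ((μ.withDensity fun x => ENNReal.ofReal (g x)) A).toReal|
      ≤ Real.sqrt (1 - ρ ^ 2) := by
  set ν := μ.withDensity fun x => ENNReal.ofReal (g x) with hνdef
  have hνuniv : ∫⁻ x, ENNReal.ofReal (g x) ∂μ = 1 := by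
    have h := hν.measure_univ
    rwa [hνdef, withDensity_apply _ MeasurableSet.univ, Measure.restrict_univ] at h
  have hgint : Integrable g μ := by
    refine ⟨hgm.aestronglyMeasurable, ?_⟩
    have heq : ∫⁻ x, ‖g x‖ₑ ∂μ = ∫⁻ x, ENNReal.ofReal (g x) ∂μ :=
      lintegral_congr fun x => Real.enorm_eq_ofReal (hg0 x)
    rw [HasFiniteIntegral, heq, hνuniv]
    exact ENNReal.one_lt_top
  set h : Ω → ℝ := fun x => Real.sqrt (g x) with hhdef
  have hhm : Measurable h := Real.continuous_sqrt.measurable.comp hgm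
  have hh0 : ∀ x, 0 ≤ h x := fun x => Real.sqrt_nonneg _
  have hsq : ∀ x, h x ^ 2 = g x := fun x => Real.sq_sqrt (hg0 x)
  have hsint : Integrable h μ := by
    refine Integrable.mono'
      (show Integrable (fun x => 1 + g x) μ from (integrable_const 1).add hgint)
      hhm.aestronglyMeasurable (ae_of_all _ fun x => ?_)
    rw [Real.norm_eq_abs, abs_of_nonneg (hh0 x)]
    nlinarith [sq_nonneg (h x - 1), hsq x]
  have hgtotal : ∫ x, g x ∂μ = 1 := by
    rw [integral_eq_lintegral_of_nonneg_ae (ae_of_all _ hg0) hgm.aestronglyMeasurable, hνuniv,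
      ENNReal.toReal_one]
  have hνB : (ν A).toReal = ∫ x in A, g x ∂μ := by
    rw [hνdef, withDensity_apply _ hA,
      integral_eq_lintegral_of_nonneg_ae (ae_of_all _ hg0) hgm.aestronglyMeasurable]
  have hμB : (μ A).toReal = ∫ x in A, (1:ℝ) ∂μ := by
    rw [setIntegral_const, smul_eq_mul, mul_one]
    rfl
  have hdiffint : Integrable (fun x => 1 - g x) μ := (integrable_const 1).sub hgint
  have htotal : ∫ x, (1 - g x) ∂μ = 0 := by
    rw [integral_sub (integrable_const 1) hgint, integral_const, probReal_univ, hgtotal]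
    simp
  have hsplit : ∫ x in A, (1 - g x) ∂μ + ∫ x in Aᶜ, (1 - g x) ∂μ = 0 := by
    rw [integral_add_compl hA hdiffint, htotal]
  have e1 : (μ A).toReal - (ν A).toReal = ∫ x in A, (1 - g x) ∂μ := by
    rw [hμB, hνB, ← integral_sub (integrable_const 1) hgint.integrableOn]
  have e2 : |∫ x in A, (1 - g x) ∂μ| ≤ ∫ x in A, |1 - g x| ∂μ := by
    simpa [Real.norm_eq_abs] using
      norm_integral_le_integral_norm (μ := μ.restrict A) (fun x => 1 - g x)
  have e2' : |∫ x in Aᶜ, (1 - g x) ∂μ| ≤ ∫ x in Aᶜ, |1 - g x| ∂μ := by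
    simpa [Real.norm_eq_abs] using
      norm_integral_le_integral_norm (μ := μ.restrict Aᶜ) (fun x => 1 - g x)
  have e3 : ∫ x in A, |1 - g x| ∂μ + ∫ x in Aᶜ, |1 - g x| ∂μ = ∫ x, |1 - g x| ∂μ :=
    integral_add_compl hA hdiffint.abs
  have habs : |(μ A).toReal - (ν A).toReal| ≤ (∫ x, |1 - g x| ∂μ) / 2 := by
    rw [e1]
    have hneg : ∫ x in Aᶜ, (1 - g x) ∂μ = -∫ x in A, (1 - g x) ∂μ := by linarith
    rw [hneg, abs_neg] at e2'
    linarith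
  -- Cauchy-Schwarz step
  have hca : Integrable (fun x => 1 - 2 * h x) μ := (integrable_const 1).sub (hsint.const_mul 2)
  have hcb : Integrable (fun x => 1 + 2 * h x) μ := (integrable_const 1).add (hsint.const_mul 2)
  have hint1 : Integrable (fun x => (1 - h x) ^ 2) μ := by
    have heq : (fun x => (1 - h x) ^ 2) = fun x => (1 - 2 * h x) + g x := by
      funext x; rw [← hsq x]; ring
    rw [heq]
    exact hca.add hgint
  have hint2 : Integrable (fun x => (1 + h x) ^ 2) μ := by
    have heq : (fun x => (1 + h x) ^ 2) = fun x => (1 + 2 * h x) + g x := by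
      funext x; rw [← hsq x]; ring
    rw [heq]
    exact hcb.add hgint
  have hps1 : ∫ x, (1 - h x) ^ 2 ∂μ = 2 - 2 * ρ := by
    have heq : (fun x => (1 - h x) ^ 2) = fun x => (1 - 2 * h x) + g x := by
      funext x; rw [← hsq x]; ring
    rw [heq, integral_add hca hgint,
      integral_sub (integrable_const 1) (hsint.const_mul 2), integral_const, probReal_univ,
      integral_const_mul, hρ, hgtotal]
    simp; ring
  have hps2 : ∫ x, (1 + h x) ^ 2 ∂μ = 2 + 2 * ρ := by
    have heq : (fun x => (1 + h x) ^ 2) = fun x => (1 + 2 * h x) + g x := by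
      funext x; rw [← hsq x]; ring
    rw [heq, integral_add hcb hgint,
      integral_add (integrable_const 1) (hsint.const_mul 2), integral_const, probReal_univ,
      integral_const_mul, hρ, hgtotal]
    simp; ring
  have hρ0 : 0 ≤ ρ := hρ ▸ integral_nonneg fun x => Real.sqrt_nonneg _
  have hρ1 : ρ ≤ 1 := by
    have hnn : 0 ≤ ∫ x, (1 - h x) ^ 2 ∂μ := integral_nonneg fun x => sq_nonneg _
    rw [hps1] at hnn; linarith
  have hCS : ∫ x, |1 - g x| ∂μ ≤ 2 * Real.sqrt (1 - ρ ^ 2) := by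
    have heq : ∀ x, |1 - g x| = |1 - h x| * (1 + h x) := by
      intro x
      calc |1 - g x| = |(1 - h x) * (1 + h x)| := by rw [← hsq x]; congr 1; ring
        _ = |1 - h x| * |1 + h x| := abs_mul _ _
        _ = |1 - h x| * (1 + h x) := by rw [abs_of_nonneg (show (0:ℝ) ≤ 1 + h x by linarith [hh0 x])]
    have hconj : Real.HolderConjugate 2 2 := Real.holderConjugate_iff.mpr ⟨one_lt_two, by norm_num⟩
    have hof2 : ENNReal.ofReal (2:ℝ) = 2 := by norm_num
    have hm1 : MemLp (fun x => |1 - h x|) (ENNReal.ofReal 2) μ := by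
      rw [hof2]
      refine (memLp_two_iff_integrable_sq
        ((measurable_const.sub hhm).abs.aestronglyMeasurable)).2 ?_
      have : (fun x => |1 - h x| ^ 2) = fun x => (1 - h x) ^ 2 := by
        funext x; rw [sq_abs]
      show Integrable (fun x => |1 - h x| ^ 2) μ
      rw [this]; exact hint1
    have hm2 : MemLp (fun x => 1 + h x) (ENNReal.ofReal 2) μ := by
      rw [hof2]
      exact (memLp_two_iff_integrable_sq
        ((aestronglyMeasurable_const).add hhm.aestronglyMeasurable)).2 hint2
    have hH := integral_mul_le_Lp_mul_Lq_of_nonneg hconj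
      (ae_of_all _ fun x => abs_nonneg (1 - h x))
      (ae_of_all _ fun x => by simp only [Pi.zero_apply]; linarith [hh0 x] :
        0 ≤ᵐ[μ] fun x => 1 + h x) hm1 hm2
    have hrw1 : ∫ x, |1 - h x| ^ (2:ℝ) ∂μ = 2 - 2 * ρ := by
      rw [← hps1]
      refine integral_congr_ae (ae_of_all _ fun x => ?_)
      simp only [show ((2:ℝ) = ((2:ℕ):ℝ)) by norm_num, Real.rpow_natCast, sq_abs]
    have hrw2 : ∫ x, (1 + h x) ^ (2:ℝ) ∂μ = 2 + 2 * ρ := by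
      rw [← hps2]
      refine integral_congr_ae (ae_of_all _ fun x => ?_)
      simp only [show ((2:ℝ) = ((2:ℕ):ℝ)) by norm_num, Real.rpow_natCast]
    rw [hrw1, hrw2] at hH
    calc ∫ x, |1 - g x| ∂μ = ∫ x, |1 - h x| * (1 + h x) ∂μ :=
          integral_congr_ae (ae_of_all _ heq)
      _ ≤ (2 - 2 * ρ) ^ ((1:ℝ)/2) * (2 + 2 * ρ) ^ ((1:ℝ)/2) := hH
      _ = Real.sqrt (2 - 2 * ρ) * Real.sqrt (2 + 2 * ρ) := by
          rw [← Real.sqrt_eq_rpow, ← Real.sqrt_eq_rpow]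
      _ = Real.sqrt ((2 - 2 * ρ) * (2 + 2 * ρ)) := (Real.sqrt_mul (by linarith) _).symm
      _ = 2 * Real.sqrt (1 - ρ ^ 2) := by
          rw [show (2 - 2*ρ) * (2 + 2*ρ) = 2 ^ 2 * (1 - ρ ^ 2) by ring,
            Real.sqrt_mul (by norm_num), Real.sqrt_sq (by norm_num)]
  linarith

lemma MW.integral_pi_prod_const {M : ℕ} (μ : Measure ℝ) [SigmaFinite μ] (f : ℝ → ℝ) :
    ∫ x : Fin M → ℝ, ∏ i, f (x i) ∂(Measure.pi fun _ : Fin M => μ) = (∫ y, f y ∂μ) ^ M := by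
  letI : MeasureSpace ℝ := ⟨μ⟩
  have h := MeasureTheory.integral_fintype_prod_eq_pow (𝕜 := ℝ) (ι := Fin M) f (μ := μ)
  simpa [Fintype.card_fin, volume_pi] using h

lemma MW.sqrt_prod {ι : Type*} (s : Finset ι) (f : ι → ℝ) (hf : ∀ i, 0 ≤ f i) :
    Real.sqrt (∏ i ∈ s, f i) = ∏ i ∈ s, Real.sqrt (f i) := by
  induction s using Finset.cons_induction with
  | empty => simp
  | cons a s ha ih => rw [Finset.prod_cons, Finset.prod_cons, Real.sqrt_mul (hf a), ih]

lemma MW.main_bound {β δ : ℝ} {M : ℕ} (hβ : 0 < β) (hδ : |δ| ≤ 1/2) {A : Set (Fin M → ℝ)}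
    (hA : MeasurableSet A) :
    |(lawX β M A).toReal - (lawXdelta β M δ A).toReal| ≤ Real.sqrt ((M : ℝ) * δ ^ 2 / 2) := by
  rw [abs_le] at hδ
  have hδ1 : (0:ℝ) < 1 + δ := by linarith [hδ.1]
  set γ := β / (1 + δ) with hγdef
  have hγ : 0 < γ := div_pos hβ hδ1
  haveI hPβ := isProbabilityMeasure_expMeasure hβ
  haveI hPγ := isProbabilityMeasure_expMeasure hγ
  haveI : IsProbabilityMeasure (lawX β M) := by unfold lawX; infer_instance
  -- identify the law of the perturbed vector
  have hmap : lawXdelta β M δ = Measure.pi fun _ : Fin M => expMeasure γ := by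
    unfold lawXdelta lawX
    exact (measurePreserving_pi (fun _ : Fin M => expMeasure β) (fun _ => expMeasure γ)
      (fun i => ⟨measurable_const_mul (1 + δ), MW.expMeasure_map hβ hδ1⟩)).map_eq
  have hdens : Measure.pi (fun _ : Fin M => expMeasure γ)
      = (lawX β M).withDensity fun x => ENNReal.ofReal (∏ i, MW.g1 β γ (x i)) := by
    rw [← MW.expMeasure_withDensity hβ hγ,
      MW.pi_withDensity (expMeasure β) _ (MW.g1_measurable β γ).ennreal_ofReal]
    unfold lawX
    congr 1
    funext x
    exact (ENNReal.ofReal_prod_of_nonneg fun i _ => MW.g1_nonneg hβ hγ (x i)).symm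
  set g : (Fin M → ℝ) → ℝ := fun x => ∏ i, MW.g1 β γ (x i) with hgdef
  have hgm : Measurable g :=
    Finset.measurable_prod _ fun i _ => (MW.g1_measurable β γ).comp (measurable_pi_apply i)
  have hg0 : ∀ x, 0 ≤ g x := fun x => Finset.prod_nonneg fun i _ => MW.g1_nonneg hβ hγ (x i)
  have hν : IsProbabilityMeasure ((lawX β M).withDensity fun x => ENNReal.ofReal (g x)) := by
    rw [← hdens]; infer_instance
  -- the Hellinger affinity
  set ρ1 : ℝ := 2 * Real.sqrt (1 + δ) / (2 + δ) with hρ1def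
  have hρ1eq : 2 * Real.sqrt (γ * β) / (β + γ) = ρ1 := by
    have h1 : γ * β = (1 + δ) * (β / (1 + δ)) ^ 2 := by rw [hγdef]; field_simp
    have h2 : Real.sqrt (γ * β) = Real.sqrt (1 + δ) * (β / (1 + δ)) := by
      rw [h1, Real.sqrt_mul hδ1.le, Real.sqrt_sq (by positivity)]
    have h3 : (0:ℝ) < 2 + δ := by linarith
    rw [hρ1def, hγdef, h2]
    rw [div_eq_div_iff (by positivity) (ne_of_gt h3)]
    field_simp
    ring
  have hρ : ∫ x, Real.sqrt (g x) ∂(lawX β M) = ρ1 ^ M := by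
    have hsq : ∀ x : Fin M → ℝ, Real.sqrt (g x) = ∏ i, Real.sqrt (MW.g1 β γ (x i)) := fun x =>
      MW.sqrt_prod Finset.univ _ fun i => MW.g1_nonneg hβ hγ (x i)
    rw [show (fun x => Real.sqrt (g x)) = fun x => ∏ i, Real.sqrt (MW.g1 β γ (x i)) from
      funext hsq]
    show ∫ x : Fin M → ℝ, ∏ i, Real.sqrt (MW.g1 β γ (x i))
        ∂(Measure.pi fun _ : Fin M => expMeasure β) = ρ1 ^ M
    rw [MW.integral_pi_prod_const (expMeasure β) (fun y => Real.sqrt (MW.g1 β γ y)),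
      MW.integral_sqrt_g1 hβ hγ, hρ1eq]
  have hcore := MW.tv_core (lawX β M) g hgm hg0 hν hA hρ
  rw [hmap, hdens]
  refine hcore.trans (Real.sqrt_le_sqrt ?_)
  -- arithmetic: 1 - (ρ1^M)^2 ≤ M δ²/2
  have h3 : (0:ℝ) < 2 + δ := by linarith [hδ.1]
  set u : ℝ := δ ^ 2 / (2 + δ) ^ 2 with hudef
  have hu0 : 0 ≤ u := by positivity
  have hρ1sq : ρ1 ^ 2 = 1 - u := by
    rw [hρ1def, hudef, div_pow, mul_pow, Real.sq_sqrt (by linarith : (0:ℝ) ≤ 1 + δ)]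
    field_simp
    ring
  have hpow : (ρ1 ^ M) ^ 2 = (1 - u) ^ M := by
    rw [← pow_mul, mul_comm, pow_mul, hρ1sq]
  rw [hpow]
  have hu2 : u ≤ 2 := by
    rw [hudef, div_le_iff₀ (by positivity)]
    nlinarith [hδ.1, hδ.2]
  have hb := one_add_mul_le_pow (show (-2:ℝ) ≤ -u by linarith) M
  have hb' : 1 - (M:ℝ) * u ≤ (1 - u) ^ M := by
    calc 1 - (M:ℝ) * u = 1 + (M:ℝ) * (-u) := by ring
      _ ≤ (1 + -u) ^ M := hb
      _ = (1 - u) ^ M := by rw [sub_eq_add_neg]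
  have huh : u ≤ δ ^ 2 / 2 := by
    rw [hudef, div_le_div_iff₀ (by positivity) two_pos]
    nlinarith [hδ.1, hδ.2]
  have hM0 : (0:ℝ) ≤ M := Nat.cast_nonneg M
  have : (M:ℝ) * u ≤ (M:ℝ) * δ ^ 2 / 2 := by
    rw [mul_div_assoc]
    exact mul_le_mul_of_nonneg_left huh hM0
  linarith

lemma MW.tvDist_le_one {β δ : ℝ} {M : ℕ} (hβ : 0 < β) :
    tvDist (lawX β M) (lawXdelta β M δ) ≤ 1 := by
  haveI := isProbabilityMeasure_expMeasure hβ
  haveI h1 : IsProbabilityMeasure (lawX β M) := by unfold lawX; infer_instance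
  haveI h2 : IsProbabilityMeasure (lawXdelta β M δ) := by
    unfold lawXdelta
    exact Measure.isProbabilityMeasure_map
      (measurable_pi_lambda _ fun i => (measurable_pi_apply i).const_mul _).aemeasurable
  refine Real.iSup_le (fun A => ?_) zero_le_one
  have ha : (lawX β M A.1).toReal ≤ 1 := by
    simpa using ENNReal.toReal_mono ENNReal.one_ne_top (prob_le_one (μ := lawX β M) (s := A.1))
  have hb : (lawXdelta β M δ A.1).toReal ≤ 1 := by
    simpa using ENNReal.toReal_mono ENNReal.one_ne_top
      (prob_le_one (μ := lawXdelta β M δ) (s := A.1))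
  have ha0 : 0 ≤ (lawX β M A.1).toReal := ENNReal.toReal_nonneg
  have hb0 : 0 ≤ (lawXdelta β M δ A.1).toReal := ENNReal.toReal_nonneg
  rw [abs_le]
  constructor <;> linarith


/-- Mermin–Wagner style perturbation lemma: for i.i.d. Exponential(β) vectors,
`‖X - X^δ‖_TV ≤ √(M/2)·|δ|`; moreover there is a universal constant `c > 0` such that
if `|δ| ≤ ε` and `Mδ² ≤ ε²` then `‖X - X^δ‖_TV ≤ c (M ε²)^{1/4}`. -/
theorem stmt_13 :
    (∀ (β : ℝ) (M : ℕ) (δ : ℝ), 0 < β → |δ| ≤ 1/2 →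
      tvDist (lawX β M) (lawXdelta β M δ) ≤ Real.sqrt (M / 2) * |δ|) ∧
    (∃ c : ℝ, 0 < c ∧ ∀ (β : ℝ) (M : ℕ) (δ ε : ℝ), 0 < β → |δ| ≤ 1/2 → 0 < ε →
      |δ| ≤ ε → (M : ℝ) * δ^2 ≤ ε^2 →
      tvDist (lawX β M) (lawXdelta β M δ) ≤ c * ((M : ℝ) * ε^2) ^ ((1 : ℝ)/4)) := by
  have part1 : ∀ (β : ℝ) (M : ℕ) (δ : ℝ), 0 < β → |δ| ≤ 1/2 →
      tvDist (lawX β M) (lawXdelta β M δ) ≤ Real.sqrt ((M : ℝ) * δ ^ 2 / 2) := by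
    intro β M δ hβ hδ
    exact Real.iSup_le (fun A => MW.main_bound hβ hδ A.2) (Real.sqrt_nonneg _)
  constructor
  · intro β M δ hβ hδ
    refine (part1 β M δ hβ hδ).trans (le_of_eq ?_)
    rw [← Real.sqrt_sq_eq_abs, ← Real.sqrt_mul (by positivity)]
    congr 1
    ring
  · refine ⟨1, one_pos, ?_⟩
    intro β M δ ε hβ hδ hε hδε hMδ
    rw [one_mul]
    set s : ℝ := (M : ℝ) * δ ^ 2 / 2 with hsdef
    have hs0 : 0 ≤ s := by positivity
    have hδ2 : δ ^ 2 ≤ ε ^ 2 := by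
      rw [← Real.sqrt_sq_eq_abs] at hδε
      nlinarith [Real.sq_sqrt (sq_nonneg δ), Real.sqrt_nonneg (δ ^ 2)]
    have hsle : s ≤ (M : ℝ) * ε ^ 2 := by
      have : (M:ℝ) * δ ^ 2 ≤ (M:ℝ) * ε ^ 2 :=
        mul_le_mul_of_nonneg_left hδ2 (Nat.cast_nonneg M)
      rw [hsdef]
      linarith
    have hT2 : tvDist (lawX β M) (lawXdelta β M δ) ≤ Real.sqrt s := part1 β M δ hβ hδ
    have hT1 : tvDist (lawX β M) (lawXdelta β M δ) ≤ 1 := MW.tvDist_le_one hβ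
    have hfinal : tvDist (lawX β M) (lawXdelta β M δ) ≤ s ^ ((1:ℝ)/4) := by
      rcases le_or_gt s 1 with h1 | h1
      · refine hT2.trans ?_
        rw [Real.sqrt_eq_rpow]
        rcases eq_or_lt_of_le hs0 with h0 | h0
        · rw [← h0]
          rw [Real.zero_rpow (by norm_num), Real.zero_rpow (by norm_num)]
        · exact Real.rpow_le_rpow_of_exponent_ge h0 h1 (by norm_num)
      · refine hT1.trans ?_
        calc (1:ℝ) = 1 ^ ((1:ℝ)/4) := (Real.one_rpow _).symm
          _ ≤ s ^ ((1:ℝ)/4) := Real.rpow_le_rpow zero_le_one h1.le (by norm_num)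
    exact hfinal.trans (Real.rpow_le_rpow hs0 hsle (by norm_num))
end
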